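/- arXiv:2201.13382 — 2 statements merged into one kernel-verified Lean document; each statement's English description precedes it below -/
import Mathlib

section
/- Let H be a finite-dimensional Hopf algebra, and let the twisted Drinfeld double D(H)_α carry crossing maps φ_α(p ⊗ a) = p∘α⁻¹ ⊗ α(a). Then each φ_α : D(H)_β → D(H)_{αβα⁻¹} is an algebra isomorphism, and φ_α ∘ φ_β = φ_{αβ} for all α, β ∈ Aut(H). -/
/-!
Statement 9: the crossing maps `φ_α(p ⊗ a) = p∘α⁻¹ ⊗ α(a)` of the twisted Drinfeld double
are algebra isomorphisms `D(H)_β → D(H)_{αβα⁻¹}`, and `φ_α ∘ φ_β = φ_{αβ}`.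
-/

open TensorProduct HopfAlgebra

section Defs

variable {k H : Type*} [CommRing k] [Ring H] [HopfAlgebra k H]

/-- convolution product on the dual. -/
noncomputable def dualMul (p q : H →ₗ[k] k) : H →ₗ[k] k :=
  (LinearMap.mul' k k) ∘ₗ (TensorProduct.map p q) ∘ₗ (Coalgebra.comul (R := k))

/-- `q(x · h · y)` as a functional of `h`. -/
noncomputable def sandwich (x y : H) (q : H →ₗ[k] k) : H →ₗ[k] k :=
  q ∘ₗ (LinearMap.mulRight k y) ∘ₗ (LinearMap.mulLeft k x)

/-- iterated comultiplication `a ↦ (a₍₁₎ ⊗ a₍₂₎) ⊗ a₍₃₎`. -/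
noncomputable def comul2 : H →ₗ[k] (H ⊗[k] H) ⊗[k] H :=
  (LinearMap.rTensor H (Coalgebra.comul (R := k))) ∘ₗ (Coalgebra.comul (R := k))

/-- A linear endomorphism of `H` is a Hopf algebra automorphism. -/
def IsHopfAut (f : H →ₗ[k] H) : Prop :=
  Function.Bijective f ∧ (∀ x y : H, f (x * y) = f x * f y) ∧ f 1 = 1 ∧
    (Coalgebra.comul (R := k)) ∘ₗ f = (TensorProduct.map f f) ∘ₗ (Coalgebra.comul (R := k)) ∧
    (Coalgebra.counit (R := k)) ∘ₗ f = (Coalgebra.counit (R := k))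

/-- underlying space of each component of the twisted Drinfeld double. -/
abbrev DD (k H : Type*) [CommRing k] [Ring H] [HopfAlgebra k H] :=
  (H →ₗ[k] k) ⊗[k] H

/-- the unit `ε ⊗ 1` of the twisted Drinfeld double. -/
noncomputable def oneDD : DD k H := (Coalgebra.counit (R := k)) ⊗ₜ[k] (1 : H)

/-- `μ` is the multiplication of the `α`-component of the twisted Drinfeld double of `H`. -/
def IsTwistedDoubleMul (αinv Sinv : H →ₗ[k] H)
    (μ : DD k H →ₗ[k] DD k H →ₗ[k] DD k H) : Prop :=
  ∀ (p q : H →ₗ[k] k) (a b : H) (ι : Type) (s : Finset ι) (x y z : ι → H),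
    comul2 (k := k) a = ∑ i ∈ s, (x i ⊗ₜ[k] y i) ⊗ₜ[k] z i →
    μ (p ⊗ₜ[k] a) (q ⊗ₜ[k] b) =
      ∑ i ∈ s, (dualMul p (sandwich (x i) (αinv (Sinv (z i))) q)) ⊗ₜ[k] (y i * b)

/-- the crossing `φ_α(p ⊗ a) = p∘α⁻¹ ⊗ α(a)` of the twisted Drinfeld double. -/
noncomputable def phiDD (f finv : H →ₗ[k] H) : DD k H →ₗ[k] DD k H :=
  TensorProduct.map (LinearMap.lcomp k k finv) f

end Defs

open Coalgebra


section Conv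
variable {k H : Type*} [CommRing k] [Ring H] [HopfAlgebra k H]

noncomputable def conv (f g : H →ₗ[k] H) : H →ₗ[k] H :=
  (LinearMap.mul' k H) ∘ₗ (TensorProduct.map f g) ∘ₗ (Coalgebra.comul (R := k))

lemma conv_repr {ι : Type*} (f g : H →ₗ[k] H) (a : H) (r : Coalgebra.Repr k a ι) :
    conv f g a = ∑ i ∈ r.index, f (r.left i) * g (r.right i) := by
  simp only [conv, LinearMap.comp_apply, ← r.eq, map_sum, TensorProduct.map_tmul,
    LinearMap.mul'_apply]

lemma conv_assoc (f g h : H →ₗ[k] H) : conv (conv f g) h = conv f (conv g h) := by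
  ext a
  have key := Coalgebra.sum_map_tmul_tmul_eq (R := k) f g h a (repr := ℛ k a)
    (a₁ := fun i => ℛ k ((ℛ k a).left i)) (a₂ := fun i => ℛ k ((ℛ k a).right i))
  have := congrArg ((LinearMap.mul' k H) ∘ₗ (LinearMap.lTensor H (LinearMap.mul' k H))) key
  simp only [map_sum, LinearMap.comp_apply, LinearMap.lTensor_tmul, LinearMap.mul'_apply] at this
  rw [conv_repr _ _ a (ℛ k a), conv_repr _ _ a (ℛ k a)]
  calc ∑ i ∈ (ℛ k a).index, conv f g ((ℛ k a).left i) * h ((ℛ k a).right i)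
      = ∑ i ∈ (ℛ k a).index, ∑ j ∈ (ℛ k ((ℛ k a).left i)).index,
          f ((ℛ k ((ℛ k a).left i)).left j) * ((ℛ k ((ℛ k a).left i)).right j |> g) *
            h ((ℛ k a).right i) := by
        refine Finset.sum_congr rfl fun i _ => ?_
        rw [conv_repr _ _ _ (ℛ k ((ℛ k a).left i)), Finset.sum_mul]
    _ = ∑ i ∈ (ℛ k a).index, f ((ℛ k a).left i) * conv g h ((ℛ k a).right i) := by
        simp only [mul_assoc] at this ⊢
        rw [← this]
        refine Finset.sum_congr rfl fun i _ => ?_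
        rw [conv_repr _ _ _ (ℛ k ((ℛ k a).right i)), Finset.mul_sum]

noncomputable def ue : H →ₗ[k] H := (Algebra.linearMap k H) ∘ₗ (Coalgebra.counit (R := k))

lemma conv_unit_right (f : H →ₗ[k] H) : conv f ue = f := by
  ext a
  have key := Coalgebra.sum_tmul_counit_eq (R := k) (ℛ k a)
  have := congrArg ((LinearMap.mul' k H) ∘ₗ (TensorProduct.map f (Algebra.linearMap k H))) key
  simp only [map_sum, LinearMap.comp_apply, TensorProduct.map_tmul, LinearMap.mul'_apply,
    Algebra.linearMap_apply, map_one, mul_one] at this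
  rw [conv_repr _ _ a (ℛ k a)]
  simpa [ue] using this

lemma conv_unit_left (f : H →ₗ[k] H) : conv ue f = f := by
  ext a
  have key := Coalgebra.sum_counit_tmul_eq (R := k) (ℛ k a)
  have := congrArg ((LinearMap.mul' k H) ∘ₗ (TensorProduct.map (Algebra.linearMap k H) f)) key
  simp only [map_sum, LinearMap.comp_apply, TensorProduct.map_tmul, LinearMap.mul'_apply,
    Algebra.linearMap_apply, map_one, one_mul] at this
  rw [conv_repr _ _ a (ℛ k a)]
  simpa [ue] using this

lemma conv_antipode_left : conv (HopfAlgebra.antipode (R := k) (A := H)) LinearMap.id = ue := by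
  ext a
  rw [conv_repr _ _ a (ℛ k a)]
  simpa [ue] using HopfAlgebra.sum_antipode_mul_eq_algebraMap_counit (R := k) (ℛ k a)

lemma conv_antipode_right : conv LinearMap.id (HopfAlgebra.antipode (R := k) (A := H)) = ue := by
  ext a
  rw [conv_repr _ _ a (ℛ k a)]
  simpa [ue] using HopfAlgebra.sum_mul_antipode_eq_algebraMap_counit (R := k) (ℛ k a)

end Conv

section AntipodeComm
variable {k H : Type*} [CommRing k] [Ring H] [HopfAlgebra k H]

/-- Transport a comul-representation along a coalgebra map. -/
noncomputable def reprMap (α : H →ₗ[k] H)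
    (hcom : (Coalgebra.comul (R := k)) ∘ₗ α = (TensorProduct.map α α) ∘ₗ (Coalgebra.comul (R := k)))
    {a : H} {ι : Type*} (r : Coalgebra.Repr k a ι) : Coalgebra.Repr k (α a) ι where
  index := r.index
  left := α ∘ r.left
  right := α ∘ r.right
  eq := by
    have := LinearMap.congr_fun hcom a
    simp only [LinearMap.comp_apply] at this
    rw [Function.comp_def, Function.comp_def, this, ← r.eq, map_sum]
    simp [TensorProduct.map_tmul]

lemma antipode_comm (α : H →ₗ[k] H)
    (hmul : ∀ x y : H, α (x * y) = α x * α y) (h1 : α 1 = 1)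
    (hcom : (Coalgebra.comul (R := k)) ∘ₗ α = (TensorProduct.map α α) ∘ₗ (Coalgebra.comul (R := k)))
    (hcou : (Coalgebra.counit (R := k)) ∘ₗ α = (Coalgebra.counit (R := k))) :
    α ∘ₗ HopfAlgebra.antipode (R := k) = HopfAlgebra.antipode (R := k) ∘ₗ α := by
  set S : H →ₗ[k] H := HopfAlgebra.antipode (R := k) with hS
  have hαu : ∀ c : k, α (algebraMap k H c) = algebraMap k H c := by
    intro c
    simp [Algebra.algebraMap_eq_smul_one, h1]
  have claim1 : conv α (S ∘ₗ α) = (ue : H →ₗ[k] H) := by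
    ext a
    rw [conv_repr _ _ a (ℛ k a)]
    have h2 := conv_repr (k := k) LinearMap.id S (α a) (reprMap α hcom (ℛ k a))
    simp only [reprMap, Function.comp_apply, LinearMap.id_apply] at h2
    have h3 : conv (LinearMap.id : H →ₗ[k] H) S (α a) = (ue : H →ₗ[k] H) (α a) := by
      rw [conv_antipode_right]
    rw [h3] at h2
    simp only [LinearMap.comp_apply]
    rw [← h2]
    simp only [ue, LinearMap.comp_apply]
    have := LinearMap.congr_fun hcou a
    simp only [LinearMap.comp_apply] at this
    rw [this]
  have claim2 : conv (α ∘ₗ S) α = (ue : H →ₗ[k] H) := by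
    ext a
    rw [conv_repr _ _ a (ℛ k a)]
    simp only [LinearMap.comp_apply]
    have h4 := HopfAlgebra.sum_antipode_mul_eq_algebraMap_counit (R := k) (ℛ k a)
    calc ∑ i ∈ (ℛ k a).index, α (S ((ℛ k a).left i)) * α ((ℛ k a).right i)
        = α (∑ i ∈ (ℛ k a).index, S ((ℛ k a).left i) * (ℛ k a).right i) := by
          rw [map_sum]; exact Finset.sum_congr rfl fun i _ => (hmul _ _).symm
      _ = ue a := by rw [h4, hαu]; rfl
  calc α ∘ₗ S = conv (α ∘ₗ S) ue := (conv_unit_right _).symm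
    _ = conv (α ∘ₗ S) (conv α (S ∘ₗ α)) := by rw [claim1]
    _ = conv (conv (α ∘ₗ S) α) (S ∘ₗ α) := (conv_assoc _ _ _).symm
    _ = conv ue (S ∘ₗ α) := by rw [claim2]
    _ = S ∘ₗ α := conv_unit_left _

end AntipodeComm

section Main
variable {k H : Type*} [CommRing k] [Ring H] [HopfAlgebra k H]

lemma myfin2 (t : H ⊗[k] H) : ∃ (n : ℕ) (x y : Fin n → H), t = ∑ i, x i ⊗ₜ[k] y i := by
  induction t using TensorProduct.induction_on with
  | zero => exact ⟨0, fun i => i.elim0, fun i => i.elim0, by simp⟩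
  | tmul a b => exact ⟨1, fun _ => a, fun _ => b, by simp⟩
  | add u v hu hv =>
    obtain ⟨n, x, y, hxy⟩ := hu
    obtain ⟨m, x', y', h'⟩ := hv
    refine ⟨n + m, Fin.append x x', Fin.append y y', ?_⟩
    rw [Fin.sum_univ_add]
    simp [Fin.append_left, Fin.append_right, ← hxy, ← h']

lemma myfin3 (t : (H ⊗[k] H) ⊗[k] H) :
    ∃ (n : ℕ) (x y z : Fin n → H), t = ∑ i, (x i ⊗ₜ[k] y i) ⊗ₜ[k] z i := by
  induction t using TensorProduct.induction_on with
  | zero => exact ⟨0, fun i => i.elim0, fun i => i.elim0, fun i => i.elim0, by simp⟩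
  | tmul u c =>
    obtain ⟨n, x, y, h⟩ := myfin2 u
    exact ⟨n, x, y, fun _ => c, by rw [h, TensorProduct.sum_tmul]⟩
  | add u v hu hv =>
    obtain ⟨n, x, y, z, hxy⟩ := hu
    obtain ⟨m, x', y', z', h'⟩ := hv
    refine ⟨n + m, Fin.append x x', Fin.append y y', Fin.append z z', ?_⟩
    rw [Fin.sum_univ_add]
    simp [Fin.append_left, Fin.append_right, ← hxy, ← h']

end Main

section PhiLemmas
variable {k H : Type*} [CommRing k] [Ring H] [HopfAlgebra k H]

lemma phiDD_comp (f finv g ginv : H →ₗ[k] H) :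
    phiDD (k := k) f finv ∘ₗ phiDD g ginv = phiDD (f ∘ₗ g) (ginv ∘ₗ finv) := by
  unfold phiDD
  rw [← TensorProduct.map_comp]
  congr 1

lemma phiDD_id : phiDD (k := k) (H := H) LinearMap.id LinearMap.id = LinearMap.id := by
  unfold phiDD
  have h : LinearMap.lcomp k k (LinearMap.id : H →ₗ[k] H) = LinearMap.id := by
    ext p h; rfl
  rw [h, TensorProduct.map_id]

end PhiLemmas

/-- The crossings `φ_α : D(H)_β → D(H)_{αβα⁻¹}` are algebra isomorphisms
and `φ_α ∘ φ_β = φ_{αβ}` for all Hopf automorphisms `α, β` of `H`. -/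
theorem twistedDoubleCrossing
    (k H : Type*) [Field k] [Ring H] [HopfAlgebra k H] [FiniteDimensional k H]
    (α αinv β βinv : H →ₗ[k] H) (hα : IsHopfAut α) (hβ : IsHopfAut β)
    (hαinv₁ : αinv ∘ₗ α = LinearMap.id) (hαinv₂ : α ∘ₗ αinv = LinearMap.id)
    (hβinv₁ : βinv ∘ₗ β = LinearMap.id) (hβinv₂ : β ∘ₗ βinv = LinearMap.id)
    (Sinv : H →ₗ[k] H)
    (hSinv₁ : Sinv ∘ₗ HopfAlgebra.antipode (R := k) = LinearMap.id)
    (hSinv₂ : HopfAlgebra.antipode (R := k) ∘ₗ Sinv = LinearMap.id)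
    -- the twisted product on `D(H)_β` and on `D(H)_{αβα⁻¹}` :
    (μβ μc : DD k H →ₗ[k] DD k H →ₗ[k] DD k H)
    (hμβ : IsTwistedDoubleMul βinv Sinv μβ)
    (hμc : IsTwistedDoubleMul (α ∘ₗ βinv ∘ₗ αinv) Sinv μc) :
    -- `φ_α` is an algebra isomorphism `D(H)_β → D(H)_{αβα⁻¹}`:
    (Function.Bijective (phiDD α αinv) ∧
      (∀ u v : DD k H, phiDD α αinv (μβ u v) = μc (phiDD α αinv u) (phiDD α αinv v)) ∧
      phiDD α αinv (oneDD (k := k) (H := H)) = oneDD) ∧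
    -- `φ_α ∘ φ_β = φ_{αβ}` :
    (phiDD (k := k) (H := H) α αinv) ∘ₗ (phiDD β βinv) = phiDD (α ∘ₗ β) (βinv ∘ₗ αinv) := by
  classical
  obtain ⟨hbij, hmulα, h1α, hcomα, hcouα⟩ := hα
  have hid₁ : ∀ x : H, αinv (α x) = x := fun x => by
    simpa using LinearMap.congr_fun hαinv₁ x
  have hid₂ : ∀ x : H, α (αinv x) = x := fun x => by
    simpa using LinearMap.congr_fun hαinv₂ x
  have hSid₁ : ∀ x : H, Sinv (HopfAlgebra.antipode (R := k) x) = x := fun x => by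
    simpa using LinearMap.congr_fun hSinv₁ x
  have hSid₂ : ∀ x : H, HopfAlgebra.antipode (R := k) (Sinv x) = x := fun x => by
    simpa using LinearMap.congr_fun hSinv₂ x
  have hαinvmul : ∀ x y : H, αinv (x * y) = αinv x * αinv y := by
    intro x y
    have h := hmulα (αinv x) (αinv y)
    rw [hid₂ x, hid₂ y] at h
    rw [← h, hid₁]
  -- antipode commutes with α, hence with Sinv
  have hSα : α ∘ₗ HopfAlgebra.antipode (R := k) = HopfAlgebra.antipode (R := k) ∘ₗ α :=
    antipode_comm α hmulα h1α hcomα hcouα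
  have hSαpt : ∀ y : H, α (HopfAlgebra.antipode (R := k) y) = HopfAlgebra.antipode (R := k) (α y) :=
    fun y => by simpa using LinearMap.congr_fun hSα y
  have hSinvα : ∀ x : H, αinv (Sinv (α x)) = Sinv x := by
    intro x
    have e1 : Sinv (α x) = α (Sinv x) := by
      conv_lhs => rw [← hSid₂ x, hSαpt (Sinv x)]
      rw [hSid₁]
    rw [e1, hid₁]
  -- comultiplication and αinv
  have hmapinv : ∀ t : H ⊗[k] H, TensorProduct.map αinv αinv (TensorProduct.map α α t) = t := by
    intro t
    rw [← LinearMap.comp_apply, ← TensorProduct.map_comp, hαinv₁, TensorProduct.map_id,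
      LinearMap.id_apply]
  have hΔα : ∀ x : H, Coalgebra.comul (R := k) (α x)
      = TensorProduct.map α α (Coalgebra.comul (R := k) x) := fun x => by
    simpa using LinearMap.congr_fun hcomα x
  have hΔinv : ∀ x : H, Coalgebra.comul (R := k) (αinv x)
      = TensorProduct.map αinv αinv (Coalgebra.comul (R := k) x) := by
    intro x
    conv_rhs => rw [← hid₂ x, hΔα (αinv x), hmapinv]
  -- dualMul and sandwich compatibilities
  have hdual : ∀ p q' : H →ₗ[k] k,
      dualMul (p ∘ₗ αinv) (q' ∘ₗ αinv) = (dualMul p q') ∘ₗ αinv := by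
    intro p q'
    ext h
    simp only [dualMul, LinearMap.comp_apply]
    rw [hΔinv h, ← LinearMap.comp_apply (TensorProduct.map p q'), ← TensorProduct.map_comp]
  have hsand : ∀ (x w : H) (q : H →ₗ[k] k),
      sandwich (α x) (α w) (q ∘ₗ αinv) = (sandwich x w q) ∘ₗ αinv := by
    intro x w q
    ext h
    simp only [sandwich, LinearMap.comp_apply, LinearMap.mulLeft_apply,
      LinearMap.mulRight_apply]
    rw [hαinvmul, hαinvmul, hid₁, hid₁]
  have hlc : ∀ (f : H →ₗ[k] H) (r : H →ₗ[k] k), LinearMap.lcomp k k f r = r ∘ₗ f :=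
    fun _ _ => rfl
  -- comul2 transport along α
  have hnat : (LinearMap.rTensor H (Coalgebra.comul (R := k))) ∘ₗ TensorProduct.map α α
      = TensorProduct.map (TensorProduct.map α α) α ∘ₗ
        LinearMap.rTensor H (Coalgebra.comul (R := k)) := by
    apply TensorProduct.ext'
    intro u v
    simp only [LinearMap.comp_apply, TensorProduct.map_tmul, LinearMap.rTensor_tmul]
    rw [hΔα u]
  have hcomul2 : ∀ a : H, comul2 (k := k) (α a)
      = TensorProduct.map (TensorProduct.map α α) α (comul2 (k := k) a) := by
    intro a
    simp only [comul2, LinearMap.comp_apply]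
    rw [hΔα a]
    exact LinearMap.congr_fun hnat (Coalgebra.comul (R := k) a)
  -- multiplicativity on pure tensors
  have hmul_pure : ∀ (p q : H →ₗ[k] k) (a b : H),
      phiDD α αinv (μβ (p ⊗ₜ[k] a) (q ⊗ₜ[k] b))
        = μc (phiDD α αinv (p ⊗ₜ[k] a)) (phiDD α αinv (q ⊗ₜ[k] b)) := by
    intro p q a b
    obtain ⟨n, x, y, z, hrep⟩ := myfin3 (comul2 (k := k) a)
    have hrep' : comul2 (k := k) (α a)
        = ∑ i : Fin n, ((α (x i)) ⊗ₜ[k] (α (y i))) ⊗ₜ[k] (α (z i)) := by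
      rw [hcomul2 a, hrep, map_sum]
      simp [TensorProduct.map_tmul]
    rw [hμβ p q a b (Fin n) Finset.univ x y z hrep]
    simp only [phiDD, TensorProduct.map_tmul]
    rw [hμc (LinearMap.lcomp k k αinv p) (LinearMap.lcomp k k αinv q) (α a) (α b)
      (Fin n) Finset.univ (fun i => α (x i)) (fun i => α (y i)) (fun i => α (z i)) hrep']
    rw [map_sum]
    refine Finset.sum_congr rfl fun i _ => ?_
    simp only [TensorProduct.map_tmul, LinearMap.comp_apply]
    rw [hSinvα (z i), hmulα (y i) b]
    congr 1
    rw [hlc, hlc, hlc, hsand (x i) (βinv (Sinv (z i))) q, hdual]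
  -- full multiplicativity
  have hmul : ∀ u v : DD k H,
      phiDD α αinv (μβ u v) = μc (phiDD α αinv u) (phiDD α αinv v) := by
    intro u v
    induction u using TensorProduct.induction_on with
    | zero => simp
    | add u₁ u₂ h₁ h₂ => simp only [map_add, LinearMap.add_apply, h₁, h₂]
    | tmul p a =>
      induction v using TensorProduct.induction_on with
      | zero => simp
      | tmul q b => exact hmul_pure p q a b
      | add v₁ v₂ h₁ h₂ => simp only [map_add, h₁, h₂]
  -- unit
  have hone : phiDD α αinv (oneDD (k := k) (H := H)) = oneDD := by
    simp only [oneDD, phiDD, TensorProduct.map_tmul, h1α]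
    congr 1
    ext h
    have := LinearMap.congr_fun hcouα (αinv h)
    simp only [LinearMap.comp_apply, hid₂] at this
    simpa [hlc] using this.symm
  -- bijectivity
  have hc1 : phiDD (k := k) αinv α ∘ₗ phiDD α αinv = LinearMap.id := by
    rw [phiDD_comp, hαinv₁, phiDD_id]
  have hc2 : phiDD (k := k) α αinv ∘ₗ phiDD αinv α = LinearMap.id := by
    rw [phiDD_comp, hαinv₂, phiDD_id]
  refine ⟨⟨Function.bijective_iff_has_inverse.mpr ⟨phiDD αinv α,
    fun u => by simpa using LinearMap.congr_fun hc1 u,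
    fun u => by simpa using LinearMap.congr_fun hc2 u⟩, hmul, hone⟩, ?_⟩
  exact phiDD_comp α αinv β βinv
end

section
/- Let H be the Taft algebra H_n of dimension n² at a primitive n-th root of unity q, generated by a group-like K (K^n = 1) and E with KE = qEK, E^n = 0, Δ(E) = E ⊗ K + 1 ⊗ E. Then H_n is doubly-balanced (i.e., there exist group-likes b ∈ H_n, β ∈ H_n^* with b² = g, β² = ζ satisfying the Kauffman–Radford condition) if and only if n is odd. -/
/-!
Statement 14: the Taft algebra `H_n` (generated by a group-like `K` with `K^n = 1` and a
skew-primitive `E` with `KE = qEK`, `E^n = 0`, at a primitive `n`-th root of unity `q`)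
is doubly-balanced if and only if `n` is odd.
-/

open TensorProduct HopfAlgebra

section Aux

variable {k H : Type*} [CommRing k] [Ring H] [HopfAlgebra k H]

lemma taft_antipode_one : antipode (R := k) (1 : H) = 1 := by
  have := mul_antipode_rTensor_comul_apply (R := k) (a := (1:H))
  simpa [Bialgebra.comul_one, Algebra.TensorProduct.one_def, LinearMap.rTensor_tmul,
    LinearMap.mul'_apply, Bialgebra.counit_one] using this

/-- product representation -/
noncomputable def Coalgebra.Repr.mul2 {ι κ : Type*} {a b : H} (ra : Coalgebra.Repr k a ι)
    (rb : Coalgebra.Repr k b κ) : Coalgebra.Repr k (a * b) (ι × κ) where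
  index := ra.index ×ˢ rb.index
  left p := ra.left p.1 * rb.left p.2
  right p := ra.right p.1 * rb.right p.2
  eq := by
    rw [Bialgebra.comul_mul, ← ra.eq, ← rb.eq, Finset.sum_mul_sum, ← Finset.sum_product']
    simp [Algebra.TensorProduct.tmul_mul_tmul]

lemma taft_counit_smul_left_sum {ι : Type*} {a : H} (r : Coalgebra.Repr k a ι) :
    ∑ i ∈ r.index, Coalgebra.counit (R := k) (r.right i) • r.left i = a := by
  have := Coalgebra.sum_tmul_counit_eq (R := k) r
  apply_fun (TensorProduct.rid k H) at this
  simp only [map_sum, TensorProduct.rid_tmul, one_smul] at this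
  exact this

lemma taft_counit_smul_right_sum {ι : Type*} {a : H} (r : Coalgebra.Repr k a ι) :
    ∑ i ∈ r.index, Coalgebra.counit (R := k) (r.left i) • r.right i = a := by
  have := Coalgebra.sum_counit_tmul_eq (R := k) r
  apply_fun (TensorProduct.lid k H) at this
  simp only [map_sum, TensorProduct.lid_tmul, one_smul] at this
  exact this

open Coalgebra in
lemma taft_G1 {ι κ : Type*} {a : H} (r : Coalgebra.Repr k a ι)
    (r2 : ∀ i : ι, Coalgebra.Repr k (r.right i) κ) :
    ∑ i ∈ r.index, ∑ j ∈ (r2 i).index,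
      (antipode (R := k) (r.left i) * (r2 i).left j) ⊗ₜ[k] (r2 i).right j = (1:H) ⊗ₜ[k] a := by
  have h := Coalgebra.sum_tmul_tmul_eq (R := k) r (fun i => ℛ k (r.left i)) r2
  apply_fun ((LinearMap.rTensor H ((LinearMap.mul' k H) ∘ₗ
      (LinearMap.rTensor H (antipode (R := k))))) ∘ₗ
      (TensorProduct.assoc k H H H).symm.toLinearMap) at h
  simp only [map_sum, LinearMap.comp_apply, LinearEquiv.coe_coe,
    TensorProduct.assoc_symm_tmul, LinearMap.rTensor_tmul, LinearMap.mul'_apply] at h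
  rw [← h]
  have inner : ∀ i ∈ r.index, ∑ j ∈ (ℛ k (r.left i)).index,
      (antipode (R := k) ((ℛ k (r.left i)).left j) * (ℛ k (r.left i)).right j) ⊗ₜ[k] r.right i
      = (1:H) ⊗ₜ[k] (Coalgebra.counit (R := k) (r.left i) • r.right i) := by
    intro i _
    rw [← TensorProduct.sum_tmul, sum_antipode_mul_eq_smul (ℛ k (r.left i))]
    rw [TensorProduct.smul_tmul]
  rw [Finset.sum_congr rfl inner, ← TensorProduct.tmul_sum, taft_counit_smul_right_sum r]

open Coalgebra in
lemma taft_antipode_mul (a b : H) :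
    antipode (R := k) (a * b) = antipode (R := k) b * antipode (R := k) a := by
  set S : H →ₗ[k] H := antipode (R := k) with hS
  let ra := ℛ k a
  let rb := ℛ k b
  let ra2 : ∀ i, Coalgebra.Repr k (ra.right i) (H × H) := fun i => ℛ k (ra.right i)
  let rb2 : ∀ j, Coalgebra.Repr k (rb.right j) (H × H) := fun j => ℛ k (rb.right j)
  set T : H := ∑ j ∈ rb.index, ∑ i ∈ ra.index, ∑ i' ∈ (ra2 i).index, ∑ j' ∈ (rb2 j).index,
      S (rb.left j) * S (ra.left i) *
        (((ra2 i).left i' * (rb2 j).left j') * S ((ra2 i).right i' * (rb2 j).right j'))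
    with hT
  have way1 : T = S b * S a := by
    have inner : ∀ j ∈ rb.index, ∀ i ∈ ra.index,
        ∑ i' ∈ (ra2 i).index, ∑ j' ∈ (rb2 j).index,
          ((ra2 i).left i' * (rb2 j).left j') * S ((ra2 i).right i' * (rb2 j).right j')
        = (counit (R := k) (ra.right i) * counit (R := k) (rb.right j)) • 1 := by
      intro j _ i _
      have h2 := sum_mul_antipode_eq_smul (R := k) (Coalgebra.Repr.mul2 (ra2 i) (rb2 j))
      rw [Bialgebra.counit_mul] at h2
      rw [← Finset.sum_product']
      exact h2
    calc T = ∑ j ∈ rb.index, ∑ i ∈ ra.index, S (rb.left j) * S (ra.left i) *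
        ((counit (R := k) (ra.right i) * counit (R := k) (rb.right j)) • 1) := by
          rw [hT]
          refine Finset.sum_congr rfl fun j hj => Finset.sum_congr rfl fun i hi => ?_
          rw [← inner j hj i hi, Finset.mul_sum]
          exact Finset.sum_congr rfl fun i' _ => by rw [Finset.mul_sum]
    _ = ∑ j ∈ rb.index, ∑ i ∈ ra.index,
          (counit (R := k) (rb.right j) • S (rb.left j)) *
          (counit (R := k) (ra.right i) • S (ra.left i)) := by
          refine Finset.sum_congr rfl fun j _ => Finset.sum_congr rfl fun i _ => ?_
          rw [mul_smul_comm, mul_one, smul_mul_assoc, mul_smul_comm, smul_smul, mul_comm]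
    _ = (∑ j ∈ rb.index, counit (R := k) (rb.right j) • S (rb.left j)) *
          (∑ i ∈ ra.index, counit (R := k) (ra.right i) • S (ra.left i)) := by
          rw [Finset.sum_mul_sum]
    _ = S b * S a := by
          simp_rw [← map_smul, ← map_sum, taft_counit_smul_left_sum]
  have way2 : T = S (a * b) := by
    have key : ∀ j, ∀ j' ∈ (rb2 j).index,
        (∑ i ∈ ra.index, ∑ i' ∈ (ra2 i).index,
          S (rb.left j) * S (ra.left i) *
            (((ra2 i).left i' * (rb2 j).left j') * S ((ra2 i).right i' * (rb2 j).right j')))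
        = (S (rb.left j) * (rb2 j).left j') * S (a * (rb2 j).right j') := by
      intro j j' _
      have h := congrArg (fun t => (LinearMap.mul' k H)
        ((TensorProduct.map
          ((LinearMap.mulRight k ((rb2 j).left j')).comp (LinearMap.mulLeft k (S (rb.left j))))
          (S ∘ₗ LinearMap.mulRight k ((rb2 j).right j'))) t)) (taft_G1 ra ra2)
      simp only [map_sum, TensorProduct.map_tmul, LinearMap.mul'_apply, LinearMap.comp_apply,
        LinearMap.mulLeft_apply, LinearMap.mulRight_apply, mul_one] at h
      rw [← h]
      exact Finset.sum_congr rfl fun i _ => Finset.sum_congr rfl fun i' _ => by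
        simp only [mul_assoc]; rfl
    calc T = ∑ j ∈ rb.index, ∑ i ∈ ra.index, ∑ j' ∈ (rb2 j).index, ∑ i' ∈ (ra2 i).index,
          S (rb.left j) * S (ra.left i) *
            (((ra2 i).left i' * (rb2 j).left j') * S ((ra2 i).right i' * (rb2 j).right j')) := by
          rw [hT]
          exact Finset.sum_congr rfl fun j _ => Finset.sum_congr rfl fun i _ => Finset.sum_comm
    _ = ∑ j ∈ rb.index, ∑ j' ∈ (rb2 j).index, ∑ i ∈ ra.index, ∑ i' ∈ (ra2 i).index,
          S (rb.left j) * S (ra.left i) *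
            (((ra2 i).left i' * (rb2 j).left j') * S ((ra2 i).right i' * (rb2 j).right j')) := by
          exact Finset.sum_congr rfl fun j _ => Finset.sum_comm
    _ = ∑ j ∈ rb.index, ∑ j' ∈ (rb2 j).index,
          (S (rb.left j) * (rb2 j).left j') * S (a * (rb2 j).right j') := by
          exact Finset.sum_congr rfl fun j _ => Finset.sum_congr rfl fun j' hj' => key j j' hj'
    _ = S (a * b) := by
          have h := congrArg (fun t => (LinearMap.mul' k H)
            ((TensorProduct.map (LinearMap.id) (S ∘ₗ LinearMap.mulLeft k a)) t)) (taft_G1 rb rb2)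
          simp only [map_sum, TensorProduct.map_tmul, LinearMap.mul'_apply, LinearMap.comp_apply,
            LinearMap.mulLeft_apply, LinearMap.id_coe, id_eq, one_mul] at h
          exact h
  rw [← way2, way1]

lemma taft_dualMul_one (φ ψ : H →ₗ[k] k) : dualMul φ ψ 1 = φ 1 * ψ 1 := by
  simp [dualMul, Bialgebra.comul_one, Algebra.TensorProduct.one_def]

lemma taft_dualMul_mul {φ ψ : H →ₗ[k] k} (hφ : ∀ x y, φ (x*y) = φ x * φ y)
    (hψ : ∀ x y, ψ (x*y) = ψ x * ψ y) (x y : H) :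
    dualMul φ ψ (x * y) = dualMul φ ψ x * dualMul φ ψ y := by
  let rx := Coalgebra.Repr.arbitrary k x
  let ry := Coalgebra.Repr.arbitrary k y
  have hxy := (Coalgebra.Repr.mul2 rx ry).eq.symm
  simp only [dualMul, LinearMap.comp_apply]
  rw [hxy, ← rx.eq, ← ry.eq]
  simp only [map_sum, TensorProduct.map_tmul, LinearMap.mul'_apply]
  rw [Finset.sum_mul_sum, ← Finset.sum_product']
  exact Finset.sum_congr rfl fun p _ => by
    dsimp [Coalgebra.Repr.mul2]; rw [hφ, hψ]; ring

variable {B : Type*} [Semiring B] [Algebra k B]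

lemma taft_algHom_ext {K E : H} (hgen : Algebra.adjoin k ({K, E} : Set H) = ⊤)
    (Φ Ψ : H →ₐ[k] B) (hK : Φ K = Ψ K) (hE : Φ E = Ψ E) : Φ = Ψ := by
  have hle : Algebra.adjoin k ({K, E} : Set H) ≤ AlgHom.equalizer Φ Ψ := by
    apply Algebra.adjoin_le
    rintro x hx
    simp only [Set.mem_insert_iff, Set.mem_singleton_iff] at hx
    rcases hx with rfl | rfl
    · exact hK
    · exact hE
  ext x
  have hx : x ∈ Algebra.adjoin k ({K, E} : Set H) := hgen.symm ▸ Algebra.mem_top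
  exact hle hx

lemma taft_linMap_ext {K E : H} (hgen : Algebra.adjoin k ({K, E} : Set H) = ⊤)
    {φ ψ : H →ₗ[k] B} (hφ1 : φ 1 = 1) (hφm : ∀ x y, φ (x*y) = φ x * φ y)
    (hψ1 : ψ 1 = 1) (hψm : ∀ x y, ψ (x*y) = ψ x * ψ y)
    (hK : φ K = ψ K) (hE : φ E = ψ E) : φ = ψ := by
  have := taft_algHom_ext hgen (AlgHom.ofLinearMap φ hφ1 hφm) (AlgHom.ofLinearMap ψ hψ1 hψm) hK hE
  exact LinearMap.ext fun x => AlgHom.congr_fun this x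

end Aux

/-- A Hopf algebra presenting the Taft algebra `H_n` at a primitive
`n`-th root of unity `q` is doubly-balanced (there are group-likes `b ∈ H`, `β ∈ H^*`
with `b² = g = K`, `β² = ζ` satisfying the Kauffman–Radford condition) iff `n` is odd. -/
theorem taft_doublyBalanced_iff_odd
    (k H : Type*) [Field k] [Ring H] [HopfAlgebra k H] [FiniteDimensional k H]
    (n : ℕ) (hn : 0 < n) (q : k) (hq : IsPrimitiveRoot q n)
    -- the Taft presentation :
    (K E : H)
    (hKn : K ^ n = 1) (hEn : E ^ n = 0) (hKE : K * E = q • (E * K))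
    (hΔK : Coalgebra.comul (R := k) K = K ⊗ₜ[k] K)
    (hΔE : Coalgebra.comul (R := k) E = E ⊗ₜ[k] K + (1 : H) ⊗ₜ[k] E)
    (hεK : Coalgebra.counit (R := k) K = 1) (hεE : Coalgebra.counit (R := k) E = 0)
    (hSK : HopfAlgebra.antipode (R := k) K = K ^ (n - 1))
    (hSE : HopfAlgebra.antipode (R := k) E = -(E * K ^ (n - 1)))
    (hgen : Algebra.adjoin k {K, E} = ⊤)
    -- the distinguished group-likes `g = K` and `ζ` with `ζ(K) = q`, `ζ(E) = 0` :
    (ζ : H →ₗ[k] k) (hζmul : ∀ x y : H, ζ (x * y) = ζ x * ζ y) (hζone : ζ 1 = 1)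
    (hζK : ζ K = q) (hζE : ζ E = 0)
    -- the group-likes of `H_n` are the powers of `K`, and its characters kill `E` and
    -- send `K` to `n`-th roots of unity (the groups `G(H_n)`, `G(H_n^*)` are cyclic of
    -- order `n`) :
    (hGL : ∀ x : H, x ≠ 0 → Coalgebra.comul (R := k) x = x ⊗ₜ[k] x →
      ∃ m : ℕ, x = K ^ m)
    (hCH : ∀ φ : H →ₗ[k] k, (∀ x y : H, φ (x * y) = φ x * φ y) → φ 1 = 1 →
      (∃ m : ℕ, φ K = q ^ m) ∧ φ E = 0) :
    -- doubly-balanced ↔ `n` odd :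
    ((∃ (b binv : H) (βf βinv : H →ₗ[k] k),
        Coalgebra.comul (R := k) b = b ⊗ₜ[k] b ∧ Coalgebra.counit (R := k) b = 1 ∧
        b * binv = 1 ∧ binv * b = 1 ∧
        (∀ x y : H, βf (x * y) = βf x * βf y) ∧ βf 1 = 1 ∧
        dualMul βf βinv = Coalgebra.counit (R := k) ∧
        dualMul βinv βf = Coalgebra.counit (R := k) ∧
        b * b = K ∧ dualMul βf βf = ζ ∧
        (∀ (x : H) (ι : Type) (s : Finset ι) (xs ys zs : ι → H),
          comul2 (k := k) x = ∑ i ∈ s, (xs i ⊗ₜ[k] ys i) ⊗ₜ[k] zs i →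
          HopfAlgebra.antipode (R := k) (HopfAlgebra.antipode (R := k) x) =
            ∑ i ∈ s, (βinv (xs i) * βf (zs i)) • (b * ys i * binv))) ↔
      Odd n) := by
  have hζKpow : ∀ j : ℕ, ζ (K ^ j) = q ^ j := by
    intro j
    induction j with
    | zero => simpa using hζone
    | succ j ih => rw [pow_succ, hζmul, ih, hζK, pow_succ]
  constructor
  · rintro ⟨b, binv, βf, βinv, hcb, hεb, hb1, hb2, hβm, hβ1, hββ', hβ'β, hbb, hββ, hKR⟩
    have hb0 : b ≠ 0 := by
      intro h0
      rw [h0, map_zero] at hεb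
      exact one_ne_zero hεb.symm
    obtain ⟨m, rfl⟩ := hGL b hb0 hcb
    have h2m : ζ (K ^ m * K ^ m) = ζ K := by rw [hbb]
    rw [hζmul, hζKpow, hζK, ← pow_add] at h2m
    have hqu : IsUnit q := hq.isUnit hn.ne'
    have hqup : IsPrimitiveRoot hqu.unit n := hq.isUnit_unit hn.ne'
    have hord : orderOf hqu.unit = n := hqup.eq_orderOf.symm
    have hupow : hqu.unit ^ (m + m) = hqu.unit ^ 1 := by
      apply Units.ext
      push_cast
      rw [IsUnit.unit_spec, h2m, pow_one]
    rw [pow_eq_pow_iff_modEq, hord] at hupow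
    rcases Nat.even_or_odd n with he | ho
    · exfalso
      have h2 : (2 : ℕ) ∣ n := he.two_dvd
      have := (Nat.ModEq.of_dvd h2 hupow)
      simp only [Nat.ModEq] at this
      omega
    · exact ho
  · intro hodd
    obtain ⟨t, ht⟩ := hodd
    have hqn : q ^ n = 1 := hq.pow_eq_one
    -- cast of K-power facts
    have hKpowcomul : ∀ j : ℕ, Coalgebra.comul (R := k) (K ^ j) = (K ^ j) ⊗ₜ[k] (K ^ j) := by
      intro j
      induction j with
      | zero => simp [Bialgebra.comul_one, Algebra.TensorProduct.one_def]
      | succ j ih =>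
        rw [pow_succ, Bialgebra.comul_mul, ih, hΔK, Algebra.TensorProduct.tmul_mul_tmul]
    have hKpowcounit : ∀ j : ℕ, Coalgebra.counit (R := k) (K ^ j) = 1 := by
      intro j
      induction j with
      | zero => simp
      | succ j ih => rw [pow_succ, Bialgebra.counit_mul, ih, hεK, mul_one]
    have hKEp : ∀ j : ℕ, K ^ j * E = q ^ j • (E * K ^ j) := by
      intro j
      induction j with
      | zero => simp
      | succ j ih =>
        calc K ^ (j+1) * E = K ^ j * (K * E) := by rw [pow_succ, mul_assoc]
        _ = K ^ j * (q • (E * K)) := by rw [hKE]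
        _ = q • (K ^ j * E * K) := by rw [mul_smul_comm, mul_assoc]
        _ = q • ((q ^ j • (E * K ^ j)) * K) := by rw [ih]
        _ = (q ^ (j+1)) • (E * K ^ (j+1)) := by
            rw [smul_mul_assoc, smul_smul, ← pow_succ', mul_assoc, ← pow_succ]
    have huK : K ^ (n-1) * K = 1 := by rw [← pow_succ, Nat.sub_add_cancel hn, hKn]
    have hKu : K * K ^ (n-1) = 1 := by rw [← pow_succ', Nat.sub_add_cancel hn, hKn]
    have hSn1 : antipode (R := k) (K ^ (n-1)) = K := by
      have hSKpow : ∀ j : ℕ, antipode (R := k) (K ^ j) = (K ^ (n-1)) ^ j := by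
        intro j
        induction j with
        | zero => simpa using taft_antipode_one
        | succ j ih => rw [pow_succ, taft_antipode_mul, hSK, ih, ← pow_succ']
      rw [hSKpow]
      have hun : (K ^ (n-1)) ^ n = 1 := by rw [← pow_mul, mul_comm, pow_mul, hKn, one_pow]
      calc (K^(n-1))^(n-1) = (K^(n-1))^(n-1) * ((K^(n-1)) * K) := by rw [huK, mul_one]
      _ = (K^(n-1))^n * K := by rw [← mul_assoc, ← pow_succ, Nat.sub_add_cancel hn]
      _ = K := by rw [hun, one_mul]
    have hSSK : antipode (R := k) (antipode (R := k) K) = K := by rw [hSK, hSn1]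
    have hSSE : antipode (R := k) (antipode (R := k) E) = q • E := by
      rw [hSE, map_neg, taft_antipode_mul, hSn1, hSE, mul_neg, neg_neg, ← mul_assoc,
        hKE, smul_mul_assoc, mul_assoc, hKu, mul_one]
    -- convolution powers of ζ
    set cp : ℕ → (H →ₗ[k] k) := fun j => (dualMul ζ)^[j] (Coalgebra.counit (R := k)) with hcp
    have cp_succ : ∀ j, cp (j+1) = dualMul ζ (cp j) := fun j =>
      Function.iterate_succ_apply' _ _ _
    have dK : ∀ (φ ψ : H →ₗ[k] k), dualMul φ ψ K = φ K * ψ K := fun φ ψ => by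
      simp [dualMul, hΔK]
    have dE : ∀ (φ ψ : H →ₗ[k] k), dualMul φ ψ E = φ E * ψ K + φ 1 * ψ E := fun φ ψ => by
      simp [dualMul, hΔE, Algebra.TensorProduct.one_def]
    have cpP : ∀ j : ℕ, (∀ x y, cp j (x*y) = cp j x * cp j y) ∧ cp j 1 = 1 ∧
        cp j K = q ^ j ∧ cp j E = 0 := by
      intro j
      induction j with
      | zero =>
        exact ⟨fun x y => Bialgebra.counit_mul x y, Bialgebra.counit_one,
          by rw [pow_zero]; exact hεK, hεE⟩
      | succ j ih =>
        obtain ⟨ihm, ih1, ihK, ihE⟩ := ih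
        refine ⟨?_, ?_, ?_, ?_⟩
        · intro x y; rw [cp_succ]; exact taft_dualMul_mul hζmul ihm x y
        · rw [cp_succ, taft_dualMul_one, hζone, ih1, mul_one]
        · rw [cp_succ, dK, hζK, ihK, ← pow_succ']
        · rw [cp_succ, dE, hζE, ihE, zero_mul, mul_zero, add_zero]
    have hbbinv : K ^ (t+1) * K ^ t = 1 := by
      rw [← pow_add, (by omega : t + 1 + t = n), hKn]
    have hbinvb : K ^ t * K ^ (t+1) = 1 := by
      rw [← pow_add, (by omega : t + (t + 1) = n), hKn]
    have hKbb : K ^ (t+1) * K ^ (t+1) = K := by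
      rw [← pow_add, (by omega : t + 1 + (t + 1) = n + 1), pow_succ, hKn, one_mul]
    refine ⟨K ^ (t+1), K ^ t, cp (t+1), cp t, hKpowcomul _, hKpowcounit _, hbbinv, hbinvb,
      (cpP (t+1)).1, (cpP (t+1)).2.1, ?_, ?_, hKbb, ?_, ?_⟩
    · -- dualMul (cp (t+1)) (cp t) = counit
      refine taft_linMap_ext hgen ?_ ?_ Bialgebra.counit_one (fun x y => Bialgebra.counit_mul x y)
        ?_ ?_
      · rw [taft_dualMul_one, (cpP _).2.1, (cpP _).2.1, mul_one]
      · exact taft_dualMul_mul (cpP _).1 (cpP _).1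
      · rw [dK, (cpP _).2.2.1, (cpP _).2.2.1, ← pow_add, (by omega : t + 1 + t = n), hqn, hεK]
      · rw [dE, (cpP _).2.2.2, (cpP _).2.2.2, zero_mul, mul_zero, add_zero, hεE]
    · -- dualMul (cp t) (cp (t+1)) = counit
      refine taft_linMap_ext hgen ?_ ?_ Bialgebra.counit_one (fun x y => Bialgebra.counit_mul x y)
        ?_ ?_
      · rw [taft_dualMul_one, (cpP _).2.1, (cpP _).2.1, mul_one]
      · exact taft_dualMul_mul (cpP _).1 (cpP _).1
      · rw [dK, (cpP _).2.2.1, (cpP _).2.2.1, ← pow_add, (by omega : t + (t + 1) = n), hqn, hεK]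
      · rw [dE, (cpP _).2.2.2, (cpP _).2.2.2, zero_mul, mul_zero, add_zero, hεE]
    · -- dualMul (cp (t+1)) (cp (t+1)) = ζ
      refine taft_linMap_ext hgen ?_ ?_ hζone hζmul ?_ ?_
      · rw [taft_dualMul_one, (cpP _).2.1, mul_one]
      · exact taft_dualMul_mul (cpP _).1 (cpP _).1
      · rw [dK, (cpP _).2.2.1, ← pow_add, (by omega : t + 1 + (t + 1) = n + 1), pow_succ,
          hqn, one_mul, hζK]
      · rw [dE, (cpP _).2.2.2, zero_mul, mul_zero, add_zero, hζE]
    · -- the Kauffman–Radford condition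
      have hcomul2K : comul2 (k := k) K = (K ⊗ₜ[k] K) ⊗ₜ[k] K := by
        simp only [comul2, LinearMap.comp_apply]
        rw [hΔK, LinearMap.rTensor_tmul, hΔK]
      have hcomul2E : comul2 (k := k) E = (E ⊗ₜ[k] K) ⊗ₜ[k] K + ((1:H) ⊗ₜ[k] E) ⊗ₜ[k] K
          + ((1:H) ⊗ₜ[k] (1:H)) ⊗ₜ[k] E := by
        simp only [comul2, LinearMap.comp_apply]
        rw [hΔE, map_add, LinearMap.rTensor_tmul, LinearMap.rTensor_tmul, hΔE,
          Bialgebra.comul_one, Algebra.TensorProduct.one_def, add_tmul]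
      have hmid : ∀ z : H, K ^ t * (K ^ (t+1) * z) = z := fun z => by
        rw [← mul_assoc, hbinvb, one_mul]
      let Φinv : H →ₐ[k] k := AlgHom.ofLinearMap (cp t) (cpP t).2.1 (cpP t).1
      let Φf : H →ₐ[k] k := AlgHom.ofLinearMap (cp (t+1)) (cpP (t+1)).2.1 (cpP (t+1)).1
      let Adb : H →ₐ[k] H := AlgHom.ofLinearMap
        ((LinearMap.mulRight k (K ^ t)) ∘ₗ (LinearMap.mulLeft k (K ^ (t+1))))
        (by simp only [LinearMap.comp_apply, LinearMap.mulLeft_apply,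
              LinearMap.mulRight_apply, mul_one]
            exact hbbinv)
        (fun a b => by
          simp only [LinearMap.comp_apply, LinearMap.mulLeft_apply, LinearMap.mulRight_apply]
          simp only [mul_assoc]
          rw [hmid])
      let F : (H ⊗[k] H) ⊗[k] H →ₐ[k] H := Algebra.TensorProduct.lift
        (Algebra.TensorProduct.lift ((Algebra.ofId k H).comp Φinv) Adb
          (fun u v => by
            simp only [AlgHom.comp_apply, Algebra.ofId_apply]
            exact Algebra.commute_algebraMap_left _ _))
        ((Algebra.ofId k H).comp Φf)
        (fun u v => by
          simp only [AlgHom.comp_apply, Algebra.ofId_apply]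
          exact Algebra.commute_algebraMap_right _ _)
      have hFtmul : ∀ xx yy zz : H, F ((xx ⊗ₜ[k] yy) ⊗ₜ[k] zz)
          = (cp t xx * cp (t+1) zz) • (K ^ (t+1) * yy * K ^ t) := by
        intro xx yy zz
        show (Algebra.TensorProduct.lift _ _ _) _ = _
        rw [Algebra.TensorProduct.lift_tmul, Algebra.TensorProduct.lift_tmul]
        simp only [AlgHom.comp_apply, Algebra.ofId_apply, AlgHom.ofLinearMap_apply,
          LinearMap.comp_apply, LinearMap.mulLeft_apply, LinearMap.mulRight_apply, Φinv, Φf, Adb]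
        rw [Algebra.smul_def, map_mul, mul_assoc, ← Algebra.commutes, ← mul_assoc]
      have hmapeq : ∀ u : H ⊗[k] H,
          (Algebra.TensorProduct.map (Bialgebra.comulAlgHom k H) (AlgHom.id k H)) u
            = LinearMap.rTensor H (Coalgebra.comul (R := k)) u := by
        intro u
        induction u with
        | zero => simp
        | tmul a b => simp [Algebra.TensorProduct.map_tmul, LinearMap.rTensor_tmul]
        | add u v hu hv => rw [map_add, map_add, hu, hv]
      let C2 : H →ₐ[k] (H ⊗[k] H) ⊗[k] H :=
        (Algebra.TensorProduct.map (Bialgebra.comulAlgHom k H) (AlgHom.id k H)).comp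
          (Bialgebra.comulAlgHom k H)
      have hC2 : ∀ y : H, C2 y = comul2 (k := k) y := fun y => by
        show (Algebra.TensorProduct.map _ _) ((Bialgebra.comulAlgHom k H) y) = _
        rw [hmapeq]
        rfl
      let SS : H →ₐ[k] H := AlgHom.ofLinearMap
        ((antipode (R := k)) ∘ₗ (antipode (R := k)))
        (by simp only [LinearMap.comp_apply]; rw [taft_antipode_one, taft_antipode_one])
        (fun a b => by
          simp only [LinearMap.comp_apply]
          rw [taft_antipode_mul, taft_antipode_mul])
      have hmain : SS = F.comp C2 := by
        apply taft_algHom_ext hgen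
        · show antipode (R := k) (antipode (R := k) K) = F (C2 K)
          rw [hSSK, hC2, hcomul2K, hFtmul, (cpP t).2.2.1, (cpP (t+1)).2.2.1, ← pow_add,
            (by omega : t + (t+1) = n), hqn, one_smul, mul_assoc, ← pow_succ', hKbb]
        · show antipode (R := k) (antipode (R := k) E) = F (C2 E)
          rw [hSSE, hC2, hcomul2E, map_add, map_add, hFtmul, hFtmul, hFtmul,
            (cpP t).2.2.2, (cpP (t+1)).2.2.2, (cpP t).2.1, (cpP (t+1)).2.2.1,
            zero_mul, zero_smul, mul_zero, zero_smul, zero_add, add_zero, one_mul,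
            hKEp (t+1), smul_mul_assoc, mul_assoc, hbbinv, mul_one, smul_smul,
            ← pow_add, (by omega : t + 1 + (t + 1) = n + 1), pow_succ, hqn, one_mul]
      intro x ι s xs ys zs hrep
      have hx : antipode (R := k) (antipode (R := k) x) = F (comul2 (k := k) x) := by
        have hh := AlgHom.congr_fun hmain x
        simp only [AlgHom.comp_apply, AlgHom.ofLinearMap_apply, LinearMap.comp_apply, SS] at hh
        rw [hC2 x] at hh
        exact hh
      rw [hx, hrep, map_sum]
      exact Finset.sum_congr rfl fun i _ => hFtmul _ _ _
end
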